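/- Let Z be a finite additive group and let s ≥ 2 be an integer. Let g : Z → ℝ and let ⟨g^{(k)}_ω : k ∈ {1,2}, ω ∈ {0,1}^s∖{0^s}⟩ be a family of real-valued functions on Z. Set I := 𝔼[ g(x) · ∏_{k∈{1,2}} ∏_{ω∈{0,1}^s∖{0^s}} g^{(k)}_ω(x + ω·h_k) | x ∈ Z, h_1 ∈ Z^s, h_2 ∈ Z^s ]. Then |I| ≤ ‖g‖_{U^{2s}(Z)} · ∏_{k∈{1,2}} ∏_{ω∈{0,1}^s∖{0^s}} ‖g^{(k)}_ω‖_{U^{2s}(Z)}. -/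

import Mathlib

open Finset

/-- The average of a real-valued function on a finite type. -/
noncomputable def avg (α : Type*) [Fintype α] (f : α → ℝ) : ℝ :=
  (∑ x, f x) / (Fintype.card α : ℝ)

/-- The Gowers uniformity norm `‖f‖_{U^s(Z)}` of `f : Z → ℝ`. -/
noncomputable def gowersNorm (Z : Type*) [AddCommGroup Z] [Fintype Z] (s : ℕ) (f : Z → ℝ) : ℝ :=
  (avg (Z × (Fin s → Z)) fun xh =>
      ∏ ω : Fin s → Bool, f (xh.1 + ∑ i, if ω i then xh.2 i else 0)) ^ (((2 : ℝ) ^ s)⁻¹)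

/-- The weak uniformity norm `‖f‖_{w^s(Z)}` of `f : Z → ℝ`. -/
noncomputable def weakNorm (Z : Type*) [AddCommGroup Z] [Fintype Z] (s : ℕ) (f : Z → ℝ) : ℝ :=
  sSup {r : ℝ | ∃ h : (Fin s → Bool) → Z → ℝ,
    (∀ ω x, h ω x ∈ Set.Icc (-1 : ℝ) 1) ∧
    r = avg (Z × (Fin s → Z)) fun xh =>
      f xh.1 * ∏ ω ∈ Finset.univ.filter (fun ω : Fin s → Bool => ω ≠ fun _ => false),
        h ω (xh.1 + ∑ i, if ω i then xh.2 i else 0)}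

/-! ### Auxiliary development: the Gowers-Cauchy-Schwarz inequality -/

section GCSAux

set_option linter.unusedSectionVars false

variable {Z : Type} [AddCommGroup Z] [Fintype Z]

/-- The Gowers inner product of a family of `2^n` functions (as an average). -/
noncomputable def gip (Z : Type) [AddCommGroup Z] [Fintype Z] (n : ℕ)
    (f : (Fin n → Bool) → Z → ℝ) : ℝ :=
  avg (Z × (Fin n → Z)) fun xh =>
    ∏ ω : Fin n → Bool, f ω (xh.1 + ∑ i, if ω i then xh.2 i else 0)

lemma gowersNorm_eq_gip (n : ℕ) (f : Z → ℝ) :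
    gowersNorm Z n f = gip Z n (fun _ => f) ^ (((2:ℝ)^n)⁻¹) := rfl

/-- The unnormalized Gowers inner product sum. -/
noncomputable def gipSum (Z : Type) [AddCommGroup Z] [Fintype Z] (n : ℕ)
    (f : (Fin n → Bool) → Z → ℝ) : ℝ :=
  ∑ x : Z, ∑ h : Fin n → Z, ∏ ω : Fin n → Bool, f ω (x + ∑ i, if ω i then h i else 0)

lemma gip_eq_gipSum (n : ℕ) (f : (Fin n → Bool) → Z → ℝ) :
    gip Z n f = gipSum Z n f / (Fintype.card (Z × (Fin n → Z)) : ℝ) := by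
  rw [gip, avg, gipSum, Fintype.sum_prod_type]

/-- Splitting a tuple at one coordinate. -/
def splitAt {n : ℕ} (j : Fin n) (Z : Type) : (Fin n → Z) ≃ Z × ({i : Fin n // i ≠ j} → Z) where
  toFun h := (h j, fun i => h i.1)
  invFun p i := if h : i = j then p.1 else p.2 ⟨i, h⟩
  left_inv h := by
    funext i
    by_cases hij : i = j
    · subst hij; simp
    · simp [hij]
  right_inv p := by
    refine Prod.ext (by simp) ?_
    funext i
    simp [dif_neg i.2]

noncomputable def cS {n : ℕ} (j : Fin n) (ω : Fin n → Bool) (h' : {i : Fin n // i ≠ j} → Z) : Z :=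
  ∑ i : {i : Fin n // i ≠ j}, if ω i.1 then h' i else 0

lemma cS_update {n : ℕ} (j : Fin n) (ω : Fin n → Bool) (b : Bool) (h' : {i : Fin n // i ≠ j} → Z) :
    cS j (Function.update ω j b) h' = cS j ω h' := by
  refine Finset.sum_congr rfl fun i _ => ?_
  rw [Function.update_of_ne i.2]

lemma gipSum_eq (n : ℕ) (j : Fin n) (f : (Fin n → Bool) → Z → ℝ) :
    gipSum Z n f = ∑ h' : {i : Fin n // i ≠ j} → Z,
      (∑ x : Z, ∏ ω ∈ univ.filter (fun ω : Fin n → Bool => ω j = false), f ω (x + cS j ω h')) *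
      (∑ y : Z, ∏ ω ∈ univ.filter (fun ω : Fin n → Bool => ω j = true), f ω (y + cS j ω h')) := by
  have hsum : ∀ (t : Z) (h' : {i : Fin n // i ≠ j} → Z) (ω : Fin n → Bool),
      (∑ i, if ω i then (splitAt j Z).symm (t, h') i else 0)
        = (if ω j then t else 0) + cS j ω h' := by
    intro t h' ω
    rw [← Finset.add_sum_erase _ _ (Finset.mem_univ j)]
    congr 1
    · simp [splitAt]
    · rw [Finset.sum_subtype (p := fun i => i ≠ j) (univ.erase j) (by simp)
        (fun i => if ω i then (splitAt j Z).symm (t, h') i else 0)]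
      refine Finset.sum_congr rfl fun i _ => ?_
      simp [splitAt, dif_neg i.2]
  have step1 : gipSum Z n f = ∑ x : Z, ∑ t : Z, ∑ h' : {i : Fin n // i ≠ j} → Z,
      (∏ ω ∈ univ.filter (fun ω : Fin n → Bool => ω j = false), f ω (x + cS j ω h')) *
      (∏ ω ∈ univ.filter (fun ω : Fin n → Bool => ω j = true), f ω ((x + t) + cS j ω h')) := by
    rw [gipSum]
    refine Finset.sum_congr rfl fun x _ => ?_
    rw [← Equiv.sum_comp (splitAt j Z).symm
      (fun h => ∏ ω : Fin n → Bool, f ω (x + ∑ i, if ω i then h i else 0)), Fintype.sum_prod_type]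
    refine Finset.sum_congr rfl fun t _ => Finset.sum_congr rfl fun h' _ => ?_
    rw [← Finset.prod_filter_mul_prod_filter_not univ (fun ω : Fin n → Bool => ω j = false)]
    congr 1
    · refine Finset.prod_congr rfl fun ω hω => ?_
      rw [hsum t h' ω, if_neg (by simp_all), zero_add]
    · rw [show univ.filter (fun ω : Fin n → Bool => ¬ω j = false)
          = univ.filter (fun ω : Fin n → Bool => ω j = true) by
        refine Finset.filter_congr fun ω _ => by simp]
      refine Finset.prod_congr rfl fun ω hω => ?_
      rw [hsum t h' ω, if_pos (by simp_all), add_assoc]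
  rw [step1]
  rw [show (∑ x : Z, ∑ t : Z, ∑ h' : {i : Fin n // i ≠ j} → Z,
      (∏ ω ∈ univ.filter (fun ω : Fin n → Bool => ω j = false), f ω (x + cS j ω h')) *
      (∏ ω ∈ univ.filter (fun ω : Fin n → Bool => ω j = true), f ω ((x + t) + cS j ω h')))
      = ∑ h' : {i : Fin n // i ≠ j} → Z, ∑ x : Z, ∑ t : Z,
      (∏ ω ∈ univ.filter (fun ω : Fin n → Bool => ω j = false), f ω (x + cS j ω h')) *
      (∏ ω ∈ univ.filter (fun ω : Fin n → Bool => ω j = true), f ω ((x + t) + cS j ω h'))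
    from (Finset.sum_congr rfl fun x _ => Finset.sum_comm).trans Finset.sum_comm]
  refine Finset.sum_congr rfl fun h' _ => ?_
  rw [Finset.sum_mul]
  refine Finset.sum_congr rfl fun x _ => ?_
  rw [← Finset.mul_sum]
  congr 1
  exact Fintype.sum_equiv (Equiv.addLeft x) _ _ (fun t => rfl)

lemma prod_filter_update {n : ℕ} (j : Fin n) (b : Bool) (G : (Fin n → Bool) → ℝ) :
    ∏ ω ∈ univ.filter (fun ω : Fin n → Bool => ω j = !b), G (Function.update ω j b)
      = ∏ ω ∈ univ.filter (fun ω : Fin n → Bool => ω j = b), G ω := by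
  refine Finset.prod_nbij' (fun ω => Function.update ω j b) (fun ω => Function.update ω j !b)
    ?_ ?_ ?_ ?_ ?_
  · intro ω hω; simp [Function.update_self]
  · intro ω hω; simp [Function.update_self]
  · intro ω hω
    simp only [mem_filter, mem_univ, true_and] at hω
    funext i
    by_cases hij : i = j
    · subst hij; simp [Function.update_self, hω]
    · simp [Function.update_of_ne hij]
  · intro ω hω
    simp only [mem_filter, mem_univ, true_and] at hω
    funext i
    by_cases hij : i = j
    · subst hij; simp [Function.update_self, hω]
    · simp [Function.update_of_ne hij]
  · intro ω hω; rfl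

lemma conv_id {n : ℕ} (j : Fin n) (b : Bool) (f : (Fin n → Bool) → Z → ℝ)
    (y : Z) (h' : {i : Fin n // i ≠ j} → Z) :
    (∏ ω ∈ univ.filter (fun ω : Fin n → Bool => ω j = b),
        f (Function.update ω j b) (y + cS j ω h'))
      = ∏ ω ∈ univ.filter (fun ω : Fin n → Bool => ω j = b), f ω (y + cS j ω h') := by
  refine Finset.prod_congr rfl fun ω hω => ?_
  simp only [mem_filter, mem_univ, true_and] at hω
  rw [show Function.update ω j b = ω from by rw [← hω]; exact Function.update_eq_self j ω]

lemma conv_flip {n : ℕ} (j : Fin n) (b : Bool) (f : (Fin n → Bool) → Z → ℝ)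
    (y : Z) (h' : {i : Fin n // i ≠ j} → Z) :
    (∏ ω ∈ univ.filter (fun ω : Fin n → Bool => ω j = !b),
        f (Function.update ω j b) (y + cS j ω h'))
      = ∏ ω ∈ univ.filter (fun ω : Fin n → Bool => ω j = b), f ω (y + cS j ω h') := by
  rw [show (fun ω => f (Function.update ω j b) (y + cS j ω h'))
      = fun ω => f (Function.update ω j b) (y + cS j (Function.update ω j b) h') from
    funext fun ω => by rw [cS_update]]
  exact prod_filter_update j b (fun ω => f ω (y + cS j ω h'))

lemma gipSum_sq_le (n : ℕ) (j : Fin n) (f : (Fin n → Bool) → Z → ℝ) :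
    gipSum Z n f ^ 2 ≤ gipSum Z n (fun ω => f (Function.update ω j false))
      * gipSum Z n (fun ω => f (Function.update ω j true)) := by
  rw [gipSum_eq n j f, gipSum_eq n j (fun ω => f (Function.update ω j false)),
    gipSum_eq n j (fun ω => f (Function.update ω j true))]
  have e0 : ∀ (y : Z) (h' : {i : Fin n // i ≠ j} → Z),
      (∏ ω ∈ univ.filter (fun ω : Fin n → Bool => ω j = true),
        f (Function.update ω j false) (y + cS j ω h'))
      = ∏ ω ∈ univ.filter (fun ω : Fin n → Bool => ω j = false), f ω (y + cS j ω h') :=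
    fun y h' => conv_flip j false f y h'
  have e1 : ∀ (y : Z) (h' : {i : Fin n // i ≠ j} → Z),
      (∏ ω ∈ univ.filter (fun ω : Fin n → Bool => ω j = false),
        f (Function.update ω j true) (y + cS j ω h'))
      = ∏ ω ∈ univ.filter (fun ω : Fin n → Bool => ω j = true), f ω (y + cS j ω h') :=
    fun y h' => conv_flip j true f y h'
  simp only [conv_id j false f, conv_id j true f, e0, e1]
  set P : ({i : Fin n // i ≠ j} → Z) → ℝ := fun h' =>
    ∑ x : Z, ∏ ω ∈ univ.filter (fun ω : Fin n → Bool => ω j = false), f ω (x + cS j ω h') with hP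
  set Q : ({i : Fin n // i ≠ j} → Z) → ℝ := fun h' =>
    ∑ y : Z, ∏ ω ∈ univ.filter (fun ω : Fin n → Bool => ω j = true), f ω (y + cS j ω h') with hQ
  calc (∑ h', P h' * Q h') ^ 2 ≤ (∑ h', P h' ^ 2) * (∑ h', Q h' ^ 2) :=
        Finset.sum_mul_sq_le_sq_mul_sq _ _ _
    _ = (∑ h', P h' * P h') * (∑ h', Q h' * Q h') := by simp [sq]

lemma gipSum_nonneg (n : ℕ) (hn : 0 < n) (g : Z → ℝ) :
    0 ≤ gipSum Z n (fun _ => g) := by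
  rw [gipSum_eq n ⟨0, hn⟩ (fun _ => g)]
  refine Finset.sum_nonneg fun h' _ => ?_
  rw [show (∑ y : Z, ∏ ω ∈ univ.filter (fun ω : Fin n → Bool => ω ⟨0, hn⟩ = true),
        g (y + cS ⟨0, hn⟩ ω h'))
      = ∑ x : Z, ∏ ω ∈ univ.filter (fun ω : Fin n → Bool => ω ⟨0, hn⟩ = false),
        g (x + cS ⟨0, hn⟩ ω h') from
    Finset.sum_congr rfl fun y _ => conv_flip ⟨0, hn⟩ false (fun _ => g) y h']
  exact mul_self_nonneg _

lemma gip_sq_le [Nonempty Z] (n : ℕ) (j : Fin n) (f : (Fin n → Bool) → Z → ℝ) :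
    gip Z n f ^ 2 ≤ gip Z n (fun ω => f (Function.update ω j false))
      * gip Z n (fun ω => f (Function.update ω j true)) := by
  rw [gip_eq_gipSum, gip_eq_gipSum, gip_eq_gipSum, div_mul_div_comm, div_pow, ← sq]
  have hN : (0:ℝ) < (Fintype.card (Z × (Fin n → Z)) : ℝ) ^ 2 := by
    have : 0 < Fintype.card (Z × (Fin n → Z)) := Fintype.card_pos
    positivity
  exact div_le_div_of_nonneg_right (gipSum_sq_le n j f) hN.le |>.trans_eq rfl

lemma gip_nonneg [Nonempty Z] (n : ℕ) (hn : 0 < n) (g : Z → ℝ) :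
    0 ≤ gip Z n (fun _ => g) := by
  rw [gip_eq_gipSum]
  exact div_nonneg (gipSum_nonneg n hn g) (by positivity)

def ovr {n : ℕ} (S : Finset (Fin n)) (ε ω : Fin n → Bool) : Fin n → Bool :=
  fun i => if i ∈ S then ε i else ω i

def AS {n : ℕ} (S : Finset (Fin n)) : Finset (Fin n → Bool) :=
  univ.filter (fun ε => ∀ i ∉ S, ε i = false)

lemma AS_empty {n : ℕ} : AS (∅ : Finset (Fin n)) = {fun _ => false} := by
  ext ε
  simp [AS, funext_iff]

lemma ovr_empty {n : ℕ} (ε ω : Fin n → Bool) : ovr ∅ ε ω = ω := by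
  funext i; simp [ovr]

lemma ovr_univ {n : ℕ} (ε ω : Fin n → Bool) : ovr univ ε ω = ε := by
  funext i; simp [ovr]

lemma AS_univ {n : ℕ} : AS (univ : Finset (Fin n)) = univ := by
  ext ε; simp [AS]

lemma ovr_update {n : ℕ} {S : Finset (Fin n)} {j : Fin n} (hj : j ∉ S)
    (ε ω : Fin n → Bool) (b : Bool) :
    ovr S ε (Function.update ω j b) = ovr (insert j S) (Function.update ε j b) ω := by
  funext i
  by_cases hij : i = j
  · subst hij
    simp [ovr, hj, Function.update_self]
  · by_cases hiS : i ∈ S <;>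
      simp [ovr, hiS, hij, Function.update_of_ne hij]

lemma AS_reindex {n : ℕ} {S : Finset (Fin n)} {j : Fin n} (hj : j ∉ S)
    (F : (Fin n → Bool) → ℝ) :
    ∏ ε ∈ AS (insert j S), F ε
      = (∏ ε ∈ AS S, F (Function.update ε j false))
        * (∏ ε ∈ AS S, F (Function.update ε j true)) := by
  rw [← Finset.prod_filter_mul_prod_filter_not (AS (insert j S)) (fun ε => ε j = false)]
  have hfilter : (AS (insert j S)).filter (fun ε => ε j = false) = AS S := by
    ext ε
    simp only [AS, mem_filter, mem_univ, true_and, mem_insert]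
    constructor
    · rintro ⟨h1, h2⟩ i hiS
      by_cases hij : i = j
      · subst hij; exact h2
      · exact h1 i (by tauto)
    · intro h
      refine ⟨fun i hi => h i (by tauto), h j hj⟩
  congr 1
  · rw [hfilter]
    refine Finset.prod_congr rfl fun ε hε => ?_
    simp only [AS, mem_filter, mem_univ, true_and] at hε
    rw [show Function.update ε j false = ε from by
      rw [← hε j hj]; exact Function.update_eq_self j ε]
  · refine Finset.prod_nbij' (fun ε => Function.update ε j false)
      (fun ε => Function.update ε j true) ?_ ?_ ?_ ?_ ?_
    · intro ε hε
      simp only [AS, mem_filter, mem_univ, true_and, mem_insert] at hε ⊢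
      intro i hiS
      by_cases hij : i = j
      · subst hij; simp [Function.update_self]
      · rw [Function.update_of_ne hij]
        exact hε.1 i (by tauto)
    · intro ε hε
      simp only [AS, mem_filter, mem_univ, true_and, mem_insert] at hε ⊢
      constructor
      · intro i hi
        push_neg at hi
        rw [Function.update_of_ne hi.1]
        exact hε i hi.2
      · simp [Function.update_self]
    · intro ε hε
      simp only [mem_filter] at hε
      have hT : ε j = true := by
        cases h : ε j
        · exact absurd h hε.2
        · rfl
      rw [Function.update_idem, ← hT]
      exact Function.update_eq_self j ε
    · intro ε hε
      simp only [AS, mem_filter, mem_univ, true_and] at hε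
      rw [Function.update_idem, ← hε j hj]
      exact Function.update_eq_self j ε
    · intro ε hε
      simp only [mem_filter] at hε
      have hT : ε j = true := by
        cases h : ε j
        · exact absurd h hε.2
        · rfl
      rw [Function.update_idem, ← hT, Function.update_eq_self]

lemma gcs_aux [Nonempty Z] (n : ℕ) (f : (Fin n → Bool) → Z → ℝ) (S : Finset (Fin n)) :
    |gip Z n f| ^ (2 ^ S.card) ≤ ∏ ε ∈ AS S, |gip Z n (fun ω => f (ovr S ε ω))| := by
  induction S using Finset.induction_on with
  | empty =>
    simp only [AS_empty, card_empty, pow_zero, pow_one, prod_singleton]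
    have : (fun ω => f (ovr (∅ : Finset (Fin n)) (fun _ => false) ω)) = f := by
      funext ω; rw [ovr_empty]
    rw [this]
  | @insert j S hj ih =>
    rw [card_insert_of_notMem hj, pow_succ, pow_mul]
    calc (|gip Z n f| ^ 2 ^ S.card) ^ 2
        ≤ (∏ ε ∈ AS S, |gip Z n (fun ω => f (ovr S ε ω))|) ^ 2 := by
          exact pow_le_pow_left₀ (by positivity) ih 2
      _ = ∏ ε ∈ AS S, |gip Z n (fun ω => f (ovr S ε ω))| ^ 2 := by rw [prod_pow]
      _ ≤ ∏ ε ∈ AS S,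
            (|gip Z n (fun ω => f (ovr (insert j S) (Function.update ε j false) ω))|
              * |gip Z n (fun ω => f (ovr (insert j S) (Function.update ε j true) ω))|) := by
          refine Finset.prod_le_prod (fun ε _ => by positivity) (fun ε _ => ?_)
          rw [sq_abs]
          have key := gip_sq_le (Z := Z) n j (fun ω => f (ovr S ε ω))
          simp only [ovr_update hj] at key
          calc gip Z n (fun ω => f (ovr S ε ω)) ^ 2
              ≤ gip Z n (fun ω => f (ovr (insert j S) (Function.update ε j false) ω))
                * gip Z n (fun ω => f (ovr (insert j S) (Function.update ε j true) ω)) := key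
            _ ≤ _ := (le_abs_self _).trans (abs_mul _ _).le
      _ = ∏ ε ∈ AS (insert j S), |gip Z n (fun ω => f (ovr (insert j S) ε ω))| := by
          rw [AS_reindex hj (fun ε => |gip Z n (fun ω => f (ovr (insert j S) ε ω))|),
            Finset.prod_mul_distrib]

lemma gcs [Nonempty Z] (n : ℕ) (hn : 0 < n) (f : (Fin n → Bool) → Z → ℝ) :
    |gip Z n f| ^ (2 ^ n) ≤ ∏ ε : Fin n → Bool, gip Z n (fun _ => f ε) := by
  have h := gcs_aux n f univ
  rw [card_univ, Fintype.card_fin, AS_univ] at h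
  refine h.trans_eq (Finset.prod_congr rfl fun ε _ => ?_)
  have : (fun ω => f (ovr univ ε ω)) = (fun _ => f ε) := by
    funext ω; rw [ovr_univ]
  rw [this, abs_of_nonneg (gip_nonneg n hn (f ε))]

lemma gip_abs_le_prod [Nonempty Z] (n : ℕ) (hn : 0 < n) (f : (Fin n → Bool) → Z → ℝ) :
    |gip Z n f| ≤ ∏ ε : Fin n → Bool, gowersNorm Z n (f ε) := by
  have hcast : (((2:ℕ)^n : ℕ) : ℝ) = (2:ℝ)^n := by push_cast; ring
  have h2 : (2:ℕ)^n ≠ 0 := by positivity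
  have key := gcs n hn f
  have step : (|gip Z n f| ^ (2^n : ℕ) : ℝ) ^ ((((2:ℕ)^n : ℕ):ℝ))⁻¹
      ≤ (∏ ε : Fin n → Bool, gip Z n (fun _ => f ε)) ^ ((((2:ℕ)^n : ℕ):ℝ))⁻¹ :=
    Real.rpow_le_rpow (by positivity) key (by positivity)
  rw [Real.pow_rpow_inv_natCast (abs_nonneg _) h2] at step
  refine step.trans_eq ?_
  rw [← Real.finset_prod_rpow _ _ (fun ε _ => gip_nonneg n hn (f ε)) _]
  refine Finset.prod_congr rfl fun ε _ => ?_
  rw [gowersNorm_eq_gip, hcast]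

lemma gowersNorm_one [Nonempty Z] (n : ℕ) :
    gowersNorm Z n (fun _ => (1:ℝ)) = 1 := by
  rw [gowersNorm_eq_gip, gip, avg]
  simp only [Finset.prod_const_one, Finset.sum_const, nsmul_eq_mul, mul_one, card_univ]
  rw [div_self (by
    have : 0 < Fintype.card (Z × (Fin n → Z)) := Fintype.card_pos
    positivity)]
  exact Real.one_rpow _

def funTwo (τ : Type*) : τ × τ ≃ (Fin 2 → τ) where
  toFun p := ![p.1, p.2]
  invFun q := (q 0, q 1)
  left_inv p := rfl
  right_inv q := by funext i; fin_cases i <;> rfl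

def pairFun (τ : Type*) (s : ℕ) : (Fin 2 → Fin s → τ) ≃ (Fin (2*s) → τ) :=
  (Equiv.curry (Fin 2) (Fin s) τ).symm.trans (Equiv.arrowCongr finProdFinEquiv (Equiv.refl τ))

lemma pairFun_apply (τ : Type*) (s : ℕ) (q : Fin 2 → Fin s → τ) (k : Fin 2) (i : Fin s) :
    pairFun τ s q (finProdFinEquiv (k, i)) = q k i := by
  simp [pairFun, Equiv.arrowCongr, Equiv.curry]

noncomputable def Fbig {Z : Type} (s : ℕ) (g : Z → ℝ) (g' : Fin 2 → (Fin s → Bool) → Z → ℝ) :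
    (Fin (2*s) → Bool) → Z → ℝ := fun ω =>
  if (fun i => ω (finProdFinEquiv (0, i))) = (fun _ => false) then
    (if (fun i => ω (finProdFinEquiv (1, i))) = (fun _ => false) then g
     else g' 1 (fun i => ω (finProdFinEquiv (1, i))))
  else
    (if (fun i => ω (finProdFinEquiv (1, i))) = (fun _ => false) then
      g' 0 (fun i => ω (finProdFinEquiv (0, i)))
     else fun _ => 1)

lemma Fbig_apply {Z : Type} (s : ℕ) (g : Z → ℝ) (g' : Fin 2 → (Fin s → Bool) → Z → ℝ)
    (a b : Fin s → Bool) :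
    Fbig s g g' (pairFun Bool s ![a, b])
      = if a = (fun _ => false) then (if b = (fun _ => false) then g else g' 1 b)
        else (if b = (fun _ => false) then g' 0 a else fun _ => (1:ℝ)) := by
  have h0 : (fun i => pairFun Bool s ![a, b] (finProdFinEquiv (0, i))) = a := by
    funext i; rw [pairFun_apply]; rfl
  have h1 : (fun i => pairFun Bool s ![a, b] (finProdFinEquiv (1, i))) = b := by
    funext i; rw [pairFun_apply]; rfl
  rw [Fbig, h0, h1]

lemma prod_split {s : ℕ} (T : (Fin s → Bool) → (Fin s → Bool) → ℝ)
    (h1 : ∀ a b, a ≠ (fun _ => false) → b ≠ (fun _ => false) → T a b = 1) :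
    (∏ a : Fin s → Bool, ∏ b : Fin s → Bool, T a b)
      = T (fun _ => false) (fun _ => false)
        * ((∏ a ∈ univ.filter (fun a : Fin s → Bool => a ≠ fun _ => false), T a (fun _ => false))
        * (∏ b ∈ univ.filter (fun b : Fin s → Bool => b ≠ fun _ => false),
            T (fun _ => false) b)) := by
  have hsplit : ∀ (G : (Fin s → Bool) → ℝ), (∏ a : Fin s → Bool, G a)
      = G (fun _ => false)
        * ∏ a ∈ univ.filter (fun a : Fin s → Bool => a ≠ fun _ => false), G a := by
    intro G
    rw [show univ.filter (fun a : Fin s → Bool => a ≠ fun _ => false)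
        = univ.erase (fun _ => false) from Finset.filter_ne' univ _,
      Finset.mul_prod_erase univ G (mem_univ _)]
  rw [hsplit (fun a => ∏ b, T a b), hsplit (fun b => T (fun _ => false) b)]
  have hrest : (∏ a ∈ univ.filter (fun a : Fin s → Bool => a ≠ fun _ => false), ∏ b, T a b)
      = ∏ a ∈ univ.filter (fun a : Fin s → Bool => a ≠ fun _ => false), T a (fun _ => false) := by
    refine Finset.prod_congr rfl fun a ha => ?_
    simp only [mem_filter, mem_univ, true_and] at ha
    rw [hsplit (fun b => T a b),
      Finset.prod_eq_one (fun b hb => h1 a b ha (by simpa using (mem_filter.1 hb).2)), mul_one]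
  rw [hrest]; ring

lemma big_sum_eq (s : ℕ) (hh : Fin 2 → Fin s → Z) (a b : Fin s → Bool) :
    (∑ i, if pairFun Bool s ![a, b] i then pairFun Z s hh i else 0)
      = (∑ i, if a i then hh 0 i else 0) + (∑ i, if b i then hh 1 i else 0) := by
  rw [← Equiv.sum_comp (finProdFinEquiv : Fin 2 × Fin s ≃ Fin (2*s))
    (fun j => if pairFun Bool s ![a, b] j then pairFun Z s hh j else 0)]
  rw [Fintype.sum_prod_type, Fin.sum_univ_two]
  congr 1
  · refine Finset.sum_congr rfl fun i _ => ?_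
    rw [pairFun_apply, pairFun_apply]
    rfl
  · refine Finset.sum_congr rfl fun i _ => ?_
    rw [pairFun_apply, pairFun_apply]
    rfl

lemma big_prod_eq (s : ℕ) (g : Z → ℝ) (g' : Fin 2 → (Fin s → Bool) → Z → ℝ)
    (x : Z) (hh : Fin 2 → Fin s → Z) :
    (∏ ω : Fin (2*s) → Bool, Fbig s g g' ω (x + ∑ i, if ω i then pairFun Z s hh i else 0))
      = g x * ∏ k : Fin 2, ∏ ω ∈ univ.filter (fun ω : Fin s → Bool => ω ≠ fun _ => false),
          g' k ω (x + ∑ i, if ω i then hh k i else 0) := by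
  rw [← Equiv.prod_comp ((funTwo (Fin s → Bool)).trans (pairFun Bool s))
    (fun ω => Fbig s g g' ω (x + ∑ i, if ω i then pairFun Z s hh i else 0))]
  rw [Fintype.prod_prod_type]
  have hz : ∀ (c : Fin 2), (∑ i, if (fun _ => false : Fin s → Bool) i then hh c i else 0) = 0 := by
    intro c; simp
  have key : ∀ a b : Fin s → Bool,
      Fbig s g g' (((funTwo (Fin s → Bool)).trans (pairFun Bool s)) (a, b))
        (x + ∑ i, if ((funTwo (Fin s → Bool)).trans (pairFun Bool s)) (a, b) i
          then pairFun Z s hh i else 0)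
      = (if a = (fun _ => false) then (if b = (fun _ => false) then g else g' 1 b)
          else (if b = (fun _ => false) then g' 0 a else fun _ => (1:ℝ)))
        (x + ((∑ i, if a i then hh 0 i else 0) + (∑ i, if b i then hh 1 i else 0))) := by
    intro a b
    have : ((funTwo (Fin s → Bool)).trans (pairFun Bool s)) (a, b) = pairFun Bool s ![a, b] := rfl
    rw [this, Fbig_apply, big_sum_eq]
  simp only [key]
  rw [prod_split (fun a b => (if a = (fun _ => false) then
      (if b = (fun _ => false) then g else g' 1 b)
      else (if b = (fun _ => false) then g' 0 a else fun _ => (1:ℝ)))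
      (x + ((∑ i, if a i then hh 0 i else 0) + (∑ i, if b i then hh 1 i else 0))))
    (fun a b ha hb => by rw [if_neg ha, if_neg hb])]
  rw [Fin.prod_univ_two]
  congr 1
  · rw [if_pos rfl, if_pos rfl, hz 0, hz 1, add_zero, add_zero]
  congr 1
  · refine Finset.prod_congr rfl fun a ha => ?_
    simp only [mem_filter, mem_univ, true_and] at ha
    rw [if_neg ha, if_pos rfl, hz 1, add_zero]
  · refine Finset.prod_congr rfl fun b hb => ?_
    simp only [mem_filter, mem_univ, true_and] at hb
    rw [if_pos rfl, if_neg hb, hz 0, zero_add]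

end GCSAux

set_option maxHeartbeats 2000000 in
theorem stmt2 (Z : Type) [AddCommGroup Z] [Fintype Z] (s : ℕ) (hs : 2 ≤ s)
    (g : Z → ℝ) (g' : Fin 2 → (Fin s → Bool) → Z → ℝ) :
    |avg (Z × (Fin 2 → Fin s → Z)) fun xh =>
        g xh.1 *
          ∏ k : Fin 2, ∏ ω ∈ Finset.univ.filter (fun ω : Fin s → Bool => ω ≠ fun _ => false),
            g' k ω (xh.1 + ∑ i, if ω i then xh.2 k i else 0)|
      ≤ gowersNorm Z (2 * s) g *
          ∏ k : Fin 2, ∏ ω ∈ Finset.univ.filter (fun ω : Fin s → Bool => ω ≠ fun _ => false),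
            gowersNorm Z (2 * s) (g' k ω) := by
  rcases isEmpty_or_nonempty Z with hZ | hZ
  · have hL : (avg (Z × (Fin 2 → Fin s → Z)) fun xh =>
        g xh.1 *
          ∏ k : Fin 2, ∏ ω ∈ Finset.univ.filter (fun ω : Fin s → Bool => ω ≠ fun _ => false),
            g' k ω (xh.1 + ∑ i, if ω i then xh.2 k i else 0)) = 0 := by
      rw [avg, Finset.univ_eq_empty, Finset.sum_empty, zero_div]
    have hg0 : gowersNorm Z (2 * s) g = 0 := by
      rw [gowersNorm, avg, Finset.univ_eq_empty, Finset.sum_empty, zero_div]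
      exact Real.zero_rpow (by positivity)
    rw [hL, abs_zero, hg0, zero_mul]
  · have hn : 0 < 2 * s := by omega
    have havg : (avg (Z × (Fin 2 → Fin s → Z)) fun xh =>
        g xh.1 *
          ∏ k : Fin 2, ∏ ω ∈ Finset.univ.filter (fun ω : Fin s → Bool => ω ≠ fun _ => false),
            g' k ω (xh.1 + ∑ i, if ω i then xh.2 k i else 0))
        = gip Z (2 * s) (Fbig s g g') := by
      rw [gip, avg, avg]
      congr 1
      · refine Fintype.sum_equiv (Equiv.prodCongr (Equiv.refl Z) (pairFun Z s)) _ _ fun p => ?_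
        obtain ⟨x, hh⟩ := p
        exact (big_prod_eq s g g' x hh).symm
      · exact_mod_cast congrArg (Nat.cast : ℕ → ℝ)
          (Fintype.card_congr (Equiv.prodCongr (Equiv.refl Z) (pairFun Z s)))
    rw [havg]
    refine (gip_abs_le_prod (2 * s) hn (Fbig s g g')).trans_eq ?_
    rw [← Equiv.prod_comp ((funTwo (Fin s → Bool)).trans (pairFun Bool s))
      (fun ε => gowersNorm Z (2 * s) (Fbig s g g' ε))]
    rw [Fintype.prod_prod_type]
    have key : ∀ a b : Fin s → Bool,
        gowersNorm Z (2 * s) (Fbig s g g' (((funTwo (Fin s → Bool)).trans (pairFun Bool s)) (a, b)))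
        = gowersNorm Z (2 * s)
            (if a = (fun _ => false) then (if b = (fun _ => false) then g else g' 1 b)
             else (if b = (fun _ => false) then g' 0 a else fun _ => (1:ℝ))) := by
      intro a b
      have : ((funTwo (Fin s → Bool)).trans (pairFun Bool s)) (a, b) = pairFun Bool s ![a, b] := rfl
      rw [this, Fbig_apply]
    simp only [key]
    rw [prod_split (fun a b => gowersNorm Z (2 * s)
        (if a = (fun _ => false) then (if b = (fun _ => false) then g else g' 1 b)
         else (if b = (fun _ => false) then g' 0 a else fun _ => (1:ℝ))))
      (fun a b ha hb => by
        rw [if_neg ha, if_neg hb]; exact gowersNorm_one (2 * s))]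
    rw [Fin.prod_univ_two]
    congr 1
    · rw [if_pos rfl, if_pos rfl]
    congr 1
    · refine Finset.prod_congr rfl fun a ha => ?_
      simp only [Finset.mem_filter, Finset.mem_univ, true_and] at ha
      rw [if_neg ha, if_pos rfl]
    · refine Finset.prod_congr rfl fun b hb => ?_
      simp only [Finset.mem_filter, Finset.mem_univ, true_and] at hb
      rw [if_pos rfl, if_neg hb]
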